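/- Let $w_1,w_2,w_3,w_4$ be four distinct points on the boundary of the upper half-space model of $\mathbb{H}^3$ (extended complex numbers), determining two disjoint geodesic lines $(w_1,w_2)$ and $(w_3,w_4)$. Then the hyperbolic distance $d$ between the two geodesics satisfies $\cosh d = \frac{1 + |[w_1,w_2;w_3,w_4]|}{|1 - [w_1,w_2;w_3,w_4]|}$, where $[w_1,w_2;w_3,w_4] = \frac{(w_1-w_3)(w_2-w_4)}{(w_1-w_4)(w_2-w_3)}$ is the cross-ratio. -/

import Mathlib

open OnePoint

/-- cosh of the hyperbolic distance between two points of the upper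
half-space model of `ℍ³`; a point is a pair `(z, t)` with `z : ℂ` and
height `t > 0`. -/
noncomputable def coshD (p q : ℂ × ℝ) : ℝ :=
  1 + (‖p.1 - q.1‖ ^ 2 + (p.2 - q.2) ^ 2) / (2 * p.2 * q.2)

/-- The geodesic of the upper half-space model with the given pair of
(distinct) endpoints in `ℂ ∪ {∞}`: a vertical line if one endpoint is `∞`,
otherwise the semicircle over the segment joining the two endpoints. -/
noncomputable def geodesicUHS : OnePoint ℂ → OnePoint ℂ → Set (ℂ × ℝ)
  | OnePoint.infty, OnePoint.infty => ∅
  | OnePoint.infty, (b : ℂ) => {p | 0 < p.2 ∧ p.1 = b}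
  | (a : ℂ), OnePoint.infty => {p | 0 < p.2 ∧ p.1 = a}
  | (a : ℂ), (b : ℂ) =>
      {p | 0 < p.2 ∧ (∃ s : ℝ, p.1 = a + (s : ℂ) * (b - a)) ∧
        ‖p.1 - (a + b) / 2‖ ^ 2 + p.2 ^ 2 = ‖b - a‖ ^ 2 / 4}

/-- The inverse hyperbolic cosine. -/
noncomputable def arcosh (x : ℝ) : ℝ := Real.log (x + Real.sqrt (x ^ 2 - 1))

noncomputable def geodDist (S T : Set (ℂ × ℝ)) : ℝ :=
  sInf {d : ℝ | ∃ p ∈ S, ∃ q ∈ T, d = arcosh (coshD p q)}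

/-- Auxiliary: the finite value of an extended complex number (junk value `0` at `∞`). -/
noncomputable def fv : OnePoint ℂ → ℂ
  | OnePoint.infty => 0
  | (a : ℂ) => a

open Classical in
/-- The cross-ratio `[w₁,w₂;w₃,w₄]` of four extended complex numbers (at most one
of which is `∞` when they are pairwise distinct). -/
noncomputable def crossRatio (w1 w2 w3 w4 : OnePoint ℂ) : ℂ :=
  if w1 = OnePoint.infty then (fv w2 - fv w4) / (fv w2 - fv w3)
  else if w2 = OnePoint.infty then (fv w1 - fv w3) / (fv w1 - fv w4)
  else if w3 = OnePoint.infty then (fv w2 - fv w4) / (fv w1 - fv w4)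
  else if w4 = OnePoint.infty then (fv w1 - fv w3) / (fv w2 - fv w3)
  else ((fv w1 - fv w3) * (fv w2 - fv w4)) / ((fv w1 - fv w4) * (fv w2 - fv w3))

/-! ### Small analytic lemmas -/

lemma cosh_arcosh {a : ℝ} (h : 1 ≤ a) : Real.cosh (arcosh a) = a := by
  have h1 : (0:ℝ) ≤ a ^ 2 - 1 := by nlinarith
  have hs : Real.sqrt (a ^ 2 - 1) ^ 2 = a ^ 2 - 1 := Real.sq_sqrt h1
  have hs0 : 0 ≤ Real.sqrt (a ^ 2 - 1) := Real.sqrt_nonneg _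
  have hy : 0 < a + Real.sqrt (a ^ 2 - 1) := by nlinarith
  rw [arcosh, Real.cosh_eq, Real.exp_log hy, Real.exp_neg, Real.exp_log hy]
  have hinv : (a + Real.sqrt (a ^ 2 - 1))⁻¹ = a - Real.sqrt (a ^ 2 - 1) := by
    rw [inv_eq_iff_eq_inv, eq_comm, inv_eq_iff_eq_inv]
    · field_simp
      nlinarith
  rw [hinv]; ring

lemma arcosh_le_arcosh {a b : ℝ} (ha : 1 ≤ a) (hab : a ≤ b) : arcosh a ≤ arcosh b := by
  have h1 : (0:ℝ) ≤ a ^ 2 - 1 := by nlinarith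
  have hy : 0 < a + Real.sqrt (a ^ 2 - 1) := by
    have := Real.sqrt_nonneg (a ^ 2 - 1); nlinarith
  apply Real.log_le_log hy
  have : Real.sqrt (a ^ 2 - 1) ≤ Real.sqrt (b ^ 2 - 1) := by
    apply Real.sqrt_le_sqrt; nlinarith
  linarith

lemma cosh_geodDist_eq (S T : Set (ℂ × ℝ)) (K : ℝ) (hK : 1 ≤ K)
    (hlb : ∀ p ∈ S, ∀ q ∈ T, K ≤ coshD p q)
    (hatt : ∃ p ∈ S, ∃ q ∈ T, coshD p q = K) :
    Real.cosh (geodDist S T) = K := by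
  have hEq : geodDist S T = arcosh K := by
    apply le_antisymm
    · obtain ⟨p, hp, q, hq, hpq⟩ := hatt
      exact csInf_le ⟨arcosh K, fun d ⟨p', hp', q', hq', hd⟩ => by
        rw [hd]; exact arcosh_le_arcosh hK (hlb p' hp' q' hq')⟩ ⟨p, hp, q, hq, by rw [hpq]⟩
    · obtain ⟨p, hp, q, hq, hpq⟩ := hatt
      have hne : ({d : ℝ | ∃ p ∈ S, ∃ q ∈ T, d = arcosh (coshD p q)}).Nonempty :=
        ⟨arcosh K, ⟨p, hp, q, hq, by rw [hpq]⟩⟩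
      apply le_csInf hne
      rintro d ⟨p', hp', q', hq', rfl⟩
      exact arcosh_le_arcosh hK (hlb p' hp' q' hq')
  rw [hEq, cosh_arcosh hK]

/-! ### Algebraic identities -/

lemma nz_identity (c d : ℂ) (σ : ℝ) :
    Complex.normSq (c + (σ:ℂ) * (d - c)) + Complex.normSq (d - c) * (σ * (1 - σ)) =
      (1 - σ) * Complex.normSq c + σ * Complex.normSq d := by
  simp [Complex.normSq_apply]; ring

lemma chord_identity (c d : ℂ) (σ : ℝ) :
    Complex.normSq ((c + (σ:ℂ) * (d - c)) - (c + d) / 2) =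
      (σ - 1/2)^2 * Complex.normSq (d - c) := by
  simp [Complex.normSq_apply]; ring

lemma t2_of_circ {c d z : ℂ} {σ t : ℝ} (hz : z = c + (σ:ℂ) * (d - c))
    (hcirc : ‖z - (c + d) / 2‖ ^ 2 + t ^ 2 = ‖d - c‖ ^ 2 / 4) :
    t^2 = Complex.normSq (d - c) * (σ * (1 - σ)) := by
  rw [hz] at hcirc
  rw [Complex.sq_norm, Complex.sq_norm, chord_identity] at hcirc
  nlinarith [hcirc]

lemma N_of_circ {c d z : ℂ} {σ t : ℝ} (hz : z = c + (σ:ℂ) * (d - c))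
    (hcirc : ‖z - (c + d) / 2‖ ^ 2 + t ^ 2 = ‖d - c‖ ^ 2 / 4) :
    Complex.normSq z + t^2 = (1 - σ) * Complex.normSq c + σ * Complex.normSq d := by
  have h1 := t2_of_circ hz hcirc
  have h2 := nz_identity c d σ
  rw [← hz] at h2
  linarith

/-! ### Symmetry and transport of `geodDist` -/

lemma coshD_symm (p q : ℂ × ℝ) : coshD p q = coshD q p := by
  rw [coshD, coshD, ← norm_neg (p.1 - q.1)]
  ring_nf

lemma geodDist_symm (S T : Set (ℂ × ℝ)) : geodDist S T = geodDist T S := by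
  rw [geodDist, geodDist]
  congr 1
  ext d
  constructor
  · rintro ⟨p, hp, q, hq, rfl⟩; exact ⟨q, hq, p, hp, by rw [coshD_symm]⟩
  · rintro ⟨p, hp, q, hq, rfl⟩; exact ⟨q, hq, p, hp, by rw [coshD_symm]⟩

lemma geodDist_congr (F : ℂ × ℝ → ℂ × ℝ) (S T S' T' : Set (ℂ × ℝ))
    (hS : ∀ p ∈ S, F p ∈ S') (hT : ∀ q ∈ T, F q ∈ T')
    (hS' : ∀ p ∈ S', ∃ p₀ ∈ S, F p₀ = p) (hT' : ∀ q ∈ T', ∃ q₀ ∈ T, F q₀ = q)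
    (hc : ∀ p ∈ S, ∀ q ∈ T, coshD (F p) (F q) = coshD p q) :
    geodDist S' T' = geodDist S T := by
  rw [geodDist, geodDist]
  congr 1
  ext d
  constructor
  · rintro ⟨p, hp, q, hq, rfl⟩
    obtain ⟨p₀, hp₀, rfl⟩ := hS' p hp
    obtain ⟨q₀, hq₀, rfl⟩ := hT' q hq
    exact ⟨p₀, hp₀, q₀, hq₀, by rw [hc p₀ hp₀ q₀ hq₀]⟩
  · rintro ⟨p, hp, q, hq, rfl⟩
    exact ⟨F p, hS p hp, F q, hT q hq, by rw [hc p hp q hq]⟩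

/-! ### Translations -/

lemma trans_coshD (b : ℂ) (p q : ℂ × ℝ) :
    coshD (p.1 + b, p.2) (q.1 + b, q.2) = coshD p q := by
  rw [coshD, coshD]
  have : p.1 + b - (q.1 + b) = p.1 - q.1 := by ring
  simp [this]

lemma trans_mem_vert (a b : ℂ) (p : ℂ × ℝ) :
    p ∈ geodesicUHS (a : OnePoint ℂ) ∞ ↔
      (p.1 + b, p.2) ∈ geodesicUHS ((a + b : ℂ) : OnePoint ℂ) ∞ := by
  show (0 < p.2 ∧ p.1 = a) ↔ (0 < p.2 ∧ p.1 + b = a + b)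
  constructor <;> rintro ⟨h1, h2⟩ <;> refine ⟨h1, ?_⟩
  · rw [h2]
  · linear_combination h2

lemma trans_mem_circ (a c b : ℂ) (p : ℂ × ℝ) :
    p ∈ geodesicUHS (a : OnePoint ℂ) (c : OnePoint ℂ) ↔
      (p.1 + b, p.2) ∈ geodesicUHS ((a + b : ℂ) : OnePoint ℂ) ((c + b : ℂ) : OnePoint ℂ) := by
  show (0 < p.2 ∧ (∃ s : ℝ, p.1 = a + (s:ℂ)*(c - a)) ∧
      ‖p.1 - (a + c)/2‖^2 + p.2^2 = ‖c - a‖^2/4) ↔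
    (0 < p.2 ∧ (∃ s : ℝ, p.1 + b = (a+b) + (s:ℂ)*((c+b) - (a+b))) ∧
      ‖p.1 + b - ((a+b) + (c+b))/2‖^2 + p.2^2 = ‖(c+b) - (a+b)‖^2/4)
  have e2 : p.1 + b - ((a+b) + (c+b))/2 = p.1 - (a + c)/2 := by ring
  have e3 : (c+b) - (a+b) = c - a := by ring
  rw [e2, e3]
  constructor <;> rintro ⟨h1, ⟨s, hs⟩, h3⟩ <;> exact ⟨h1, ⟨s, by linear_combination hs⟩, h3⟩

/-- Translating both geodesics (finite endpoints apart from one `∞` in the first pair)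
leaves `geodDist` unchanged. -/
lemma geodDist_trans_vert (a c d b : ℂ) :
    geodDist (geodesicUHS ((a + b :ℂ) : OnePoint ℂ) ∞)
        (geodesicUHS ((c + b :ℂ) : OnePoint ℂ) ((d + b :ℂ) : OnePoint ℂ)) =
      geodDist (geodesicUHS (a : OnePoint ℂ) ∞)
        (geodesicUHS (c : OnePoint ℂ) (d : OnePoint ℂ)) := by
  apply geodDist_congr (fun p => (p.1 + b, p.2))
  · exact fun p hp => (trans_mem_vert a b p).mp hp
  · exact fun q hq => (trans_mem_circ c d b q).mp hq
  · intro p hp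
    refine ⟨(p.1 + -b, p.2), ?_, by simp⟩
    have h := (trans_mem_vert (a+b) (-b) p).mp hp
    have e : (a + b + -b : ℂ) = a := by ring
    rwa [e] at h
  · intro q hq
    refine ⟨(q.1 + -b, q.2), ?_, by simp⟩
    have h := (trans_mem_circ (c+b) (d+b) (-b) q).mp hq
    have e1 : (c + b + -b : ℂ) = c := by ring
    have e2 : (d + b + -b : ℂ) = d := by ring
    rwa [e1, e2] at h
  · exact fun p _ q _ => trans_coshD b p q

lemma geodDist_trans_circ (a a' c d b : ℂ) :
    geodDist (geodesicUHS ((a + b :ℂ) : OnePoint ℂ) ((a' + b :ℂ) : OnePoint ℂ))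
        (geodesicUHS ((c + b :ℂ) : OnePoint ℂ) ((d + b :ℂ) : OnePoint ℂ)) =
      geodDist (geodesicUHS (a : OnePoint ℂ) (a' : OnePoint ℂ))
        (geodesicUHS (c : OnePoint ℂ) (d : OnePoint ℂ)) := by
  apply geodDist_congr (fun p => (p.1 + b, p.2))
  · exact fun p hp => (trans_mem_circ a a' b p).mp hp
  · exact fun q hq => (trans_mem_circ c d b q).mp hq
  · intro p hp
    refine ⟨(p.1 + -b, p.2), ?_, by simp⟩
    have h := (trans_mem_circ (a+b) (a'+b) (-b) p).mp hp
    have e1 : (a + b + -b : ℂ) = a := by ring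
    have e2 : (a' + b + -b : ℂ) = a' := by ring
    rwa [e1, e2] at h
  · intro q hq
    refine ⟨(q.1 + -b, q.2), ?_, by simp⟩
    have h := (trans_mem_circ (c+b) (d+b) (-b) q).mp hq
    have e1 : (c + b + -b : ℂ) = c := by ring
    have e2 : (d + b + -b : ℂ) = d := by ring
    rwa [e1, e2] at h
  · exact fun p _ q _ => trans_coshD b p q

/-! ### The inversion -/

noncomputable def Jmap (p : ℂ × ℝ) : ℂ × ℝ :=
  ((starRingEnd ℂ) p.1 / ((Complex.normSq p.1 + p.2^2 : ℝ) : ℂ),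
    p.2 / (Complex.normSq p.1 + p.2^2))

lemma Jmap_N_pos (p : ℂ × ℝ) (hp : 0 < p.2) : 0 < Complex.normSq p.1 + p.2^2 := by
  nlinarith [Complex.normSq_nonneg p.1]

lemma Jmap_Jmap (p : ℂ × ℝ) (hp : 0 < p.2) : Jmap (Jmap p) = p := by
  have hN := Jmap_N_pos p hp
  set N := Complex.normSq p.1 + p.2^2 with hNdef
  have hN' : Complex.normSq ((starRingEnd ℂ) p.1 / ((N:ℝ):ℂ)) + (p.2/N)^2 = 1/N := by
    rw [map_div₀, Complex.normSq_conj, Complex.normSq_ofReal]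
    field_simp
    ring
  rw [Jmap, Jmap]
  simp only
  rw [hN']
  have h1 : ((1/N : ℝ) : ℂ) ≠ 0 := by
    simp only [ne_eq, Complex.ofReal_eq_zero]
    positivity
  rw [Prod.ext_iff]
  constructor
  · show (starRingEnd ℂ) ((starRingEnd ℂ) p.1 / ((N:ℝ):ℂ)) / ((1/N : ℝ):ℂ) = p.1
    rw [map_div₀]
    simp only [Complex.conj_conj, Complex.conj_ofReal]
    push_cast
    have : (N:ℂ) ≠ 0 := by
      simp only [ne_eq, Complex.ofReal_eq_zero]; positivity
    field_simp
  · show p.2 / N / (1/N) = p.2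
    field_simp

lemma key_normSq (zp zq : ℂ) (tp tq : ℝ) :
    Complex.normSq ((starRingEnd ℂ) zp * (((Complex.normSq zq + tq^2 : ℝ)) : ℂ) -
        (((Complex.normSq zp + tp^2 : ℝ)) : ℂ) * (starRingEnd ℂ) zq) +
      (tp*(Complex.normSq zq + tq^2) - tq*(Complex.normSq zp + tp^2))^2 =
    (Complex.normSq (zp - zq) + (tp - tq)^2) *
      ((Complex.normSq zp + tp^2) * (Complex.normSq zq + tq^2)) := by
  simp only [Complex.normSq_apply, Complex.sub_re, Complex.sub_im, Complex.mul_re,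
    Complex.mul_im, Complex.conj_re, Complex.conj_im, Complex.ofReal_re, Complex.ofReal_im]
  ring

lemma J_coshD (p q : ℂ × ℝ) (hp : 0 < p.2) (hq : 0 < q.2) :
    coshD (Jmap p) (Jmap q) = coshD p q := by
  have hNp := Jmap_N_pos p hp
  have hNq := Jmap_N_pos q hq
  set Np := Complex.normSq p.1 + p.2^2 with hNpd
  set Nq := Complex.normSq q.1 + q.2^2 with hNqd
  have hNp' : ((Np:ℝ):ℂ) ≠ 0 := by simp only [ne_eq, Complex.ofReal_eq_zero]; positivity
  have hNq' : ((Nq:ℝ):ℂ) ≠ 0 := by simp only [ne_eq, Complex.ofReal_eq_zero]; positivity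
  rw [coshD, coshD, Jmap, Jmap]
  simp only [Complex.sq_norm]
  rw [div_sub_div _ _ hNp' hNq']
  rw [show ((Np:ℝ):ℂ) * ((Nq:ℝ):ℂ) = (((Np*Nq : ℝ)):ℂ) by push_cast; ring]
  rw [map_div₀, Complex.normSq_ofReal]
  have hkey := key_normSq p.1 q.1 p.2 q.2
  rw [← hNpd, ← hNqd] at hkey
  have hkey' : Complex.normSq ((starRingEnd ℂ) p.1 * ((Nq:ℝ):ℂ) - ((Np:ℝ):ℂ) * (starRingEnd ℂ) q.1)
      = (Complex.normSq (p.1 - q.1) + (p.2 - q.2)^2) * (Np * Nq) - (p.2*Nq - q.2*Np)^2 := by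
    linarith [hkey]
  rw [hkey']
  rw [← hNpd, ← hNqd]
  field_simp
  ring

lemma J_mem_circ (c d : ℂ) (hc : c ≠ 0) (hd : d ≠ 0) (hcd : c ≠ d) (p : ℂ × ℝ)
    (hp : p ∈ geodesicUHS (c : OnePoint ℂ) (d : OnePoint ℂ)) :
    Jmap p ∈ geodesicUHS ((c⁻¹ : ℂ) : OnePoint ℂ) ((d⁻¹ : ℂ) : OnePoint ℂ) := by
  obtain ⟨ht, ⟨σ, hz⟩, hcirc⟩ := hp
  have hN := Jmap_N_pos p ht
  set N := Complex.normSq p.1 + p.2^2 with hNdef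
  have hNval : N = (1 - σ) * Complex.normSq c + σ * Complex.normSq d := N_of_circ hz hcirc
  have ht2 : p.2^2 = Complex.normSq (d - c) * (σ * (1 - σ)) := t2_of_circ hz hcirc
  have hN0 : (N:ℝ) ≠ 0 := ne_of_gt hN
  have hNc0 : ((N:ℝ):ℂ) ≠ 0 := by simpa using hN0
  set σ' : ℝ := σ * Complex.normSq d / N with hσ'
  have hmain : (starRingEnd ℂ) p.1 * (c * d) =
      ((N:ℝ):ℂ) * d + (σ:ℂ) * ((Complex.normSq d : ℝ):ℂ) * (c - d) := by
    have hNc : ((N:ℝ):ℂ) = (1 - (σ:ℂ)) * (c * (starRingEnd ℂ) c) +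
        (σ:ℂ) * (d * (starRingEnd ℂ) d) := by
      rw [hNval]
      push_cast [← Complex.mul_conj]
      ring
    have hdd : ((Complex.normSq d : ℝ):ℂ) = d * (starRingEnd ℂ) d := (Complex.mul_conj d).symm
    rw [hNc, hdd, hz]
    simp only [map_add, map_mul, map_sub, Complex.conj_ofReal]
    ring
  have hfirst : (starRingEnd ℂ) p.1 / ((N:ℝ):ℂ) = c⁻¹ + ((σ':ℝ):ℂ) * (d⁻¹ - c⁻¹) := by
    rw [div_eq_iff hNc0]
    apply mul_right_cancel₀ (mul_ne_zero hc hd)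
    rw [hmain]
    push_cast [hσ']
    field_simp
  refine ⟨div_pos ht hN, ⟨σ', hfirst⟩, ?_⟩
  show ‖(Jmap p).1 - (c⁻¹ + d⁻¹)/2‖^2 + (Jmap p).2^2 =
    ‖d⁻¹ - c⁻¹‖^2/4
  have hJ1 : (Jmap p).1 = c⁻¹ + ((σ':ℝ):ℂ) * (d⁻¹ - c⁻¹) := hfirst
  rw [hJ1, Complex.sq_norm, Complex.sq_norm, chord_identity]
  show (σ' - 1/2)^2 * Complex.normSq (d⁻¹ - c⁻¹) + (p.2/N)^2 = Complex.normSq (d⁻¹ - c⁻¹)/4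
  have hD' : Complex.normSq (d⁻¹ - c⁻¹) =
      Complex.normSq (d - c) / (Complex.normSq c * Complex.normSq d) := by
    have : d⁻¹ - c⁻¹ = (c - d) / (c * d) := by
      field_simp
    rw [this, Complex.normSq_div, Complex.normSq_mul]
    rw [show Complex.normSq (c - d) = Complex.normSq (d - c) by
      rw [← Complex.normSq_neg]; ring_nf]
  have hnc0 : Complex.normSq c ≠ 0 := by simpa using hc
  have hnd0 : Complex.normSq d ≠ 0 := by simpa using hd
  rw [hD', hσ']
  rw [div_pow p.2 N, ht2]
  field_simp
  rw [hNval]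
  ring

lemma J_mem_circ_to_vert (a : ℂ) (ha : a ≠ 0) (p : ℂ × ℝ)
    (hp : p ∈ geodesicUHS (a : OnePoint ℂ) ((0:ℂ) : OnePoint ℂ)) :
    Jmap p ∈ geodesicUHS ((a⁻¹ : ℂ) : OnePoint ℂ) ∞ := by
  obtain ⟨ht, ⟨σ, hz⟩, hcirc⟩ := hp
  have hN := Jmap_N_pos p ht
  set N := Complex.normSq p.1 + p.2^2 with hNdef
  have hNval : N = (1 - σ) * Complex.normSq a := by
    have := N_of_circ hz hcirc
    simpa using this
  have hNc0 : ((N:ℝ):ℂ) ≠ 0 := by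
    simp only [ne_eq, Complex.ofReal_eq_zero]; exact ne_of_gt hN
  refine ⟨div_pos ht hN, ?_⟩
  show (starRingEnd ℂ) p.1 / ((N:ℝ):ℂ) = a⁻¹
  rw [div_eq_iff hNc0]
  apply mul_right_cancel₀ ha
  have hstep : (starRingEnd ℂ) p.1 * a = ((N:ℝ):ℂ) := by
    rw [hz]
    push_cast [hNval]
    simp only [map_add, map_mul, map_sub, Complex.conj_ofReal, map_zero]
    linear_combination (1 - (σ:ℂ)) * Complex.mul_conj a
  rw [hstep]
  field_simp

lemma J_mem_vert_to_circ (b : ℂ) (hb : b ≠ 0) (p : ℂ × ℝ)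
    (hp : p ∈ geodesicUHS (b : OnePoint ℂ) ∞) :
    Jmap p ∈ geodesicUHS ((b⁻¹ : ℂ) : OnePoint ℂ) ((0:ℂ) : OnePoint ℂ) := by
  obtain ⟨ht, hz⟩ := hp
  have hN := Jmap_N_pos p ht
  set N := Complex.normSq p.1 + p.2^2 with hNdef
  have hNval : N = Complex.normSq b + p.2^2 := by rw [hNdef, hz]
  have hN0 : N ≠ 0 := ne_of_gt hN
  have hNc0 : ((N:ℝ):ℂ) ≠ 0 := by simpa using hN0
  have hnb0 : Complex.normSq b ≠ 0 := by simpa using hb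
  set σ' : ℝ := p.2^2 / N with hσ'
  have hσc : ((σ':ℝ):ℂ) = ((p.2^2:ℝ):ℂ)/((N:ℝ):ℂ) := by push_cast [hσ']; norm_cast
  have hNcast : ((N:ℝ):ℂ) = ((Complex.normSq b:ℝ):ℂ) + ((p.2^2:ℝ):ℂ) := by
    rw [hNval]; push_cast; ring
  have key : (starRingEnd ℂ) b * b = ((N:ℝ):ℂ) - ((p.2^2 : ℝ):ℂ) := by
    rw [hNcast]; linear_combination Complex.mul_conj b
  have hfirst : (starRingEnd ℂ) p.1 / ((N:ℝ):ℂ) = b⁻¹ + ((σ':ℝ):ℂ) * (0 - b⁻¹) := by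
    rw [div_eq_iff hNc0, hz, hσc]
    push_cast at key ⊢
    have hb' : b * b⁻¹ = 1 := mul_inv_cancel₀ hb
    have hN' : ((N:ℝ):ℂ) * ((N:ℝ):ℂ)⁻¹ = 1 := mul_inv_cancel₀ hNc0
    linear_combination ((p.2:ℂ)^2 * b⁻¹) * hN' + b⁻¹ * key - (starRingEnd ℂ) b * hb'
  refine ⟨div_pos ht hN, ⟨σ', hfirst⟩, ?_⟩
  show ‖(Jmap p).1 - (b⁻¹ + 0)/2‖^2 + (Jmap p).2^2 = ‖0 - b⁻¹‖^2/4
  have hJ1 : (Jmap p).1 = b⁻¹ + ((σ':ℝ):ℂ) * (0 - b⁻¹) := hfirst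
  rw [hJ1, Complex.sq_norm, Complex.sq_norm, chord_identity]
  show (σ' - 1/2)^2 * Complex.normSq (0 - b⁻¹) + (p.2/N)^2 = Complex.normSq (0 - b⁻¹)/4
  have h0b : Complex.normSq (0 - b⁻¹) = (Complex.normSq b)⁻¹ := by
    rw [zero_sub, Complex.normSq_neg, Complex.normSq_inv]
  have hsum0 : Complex.normSq b + p.2^2 ≠ 0 := by rw [← hNval]; exact hN0
  rw [h0b, hσ', hNval]
  field_simp [hnb0, hsum0]
  ring

lemma coshD_axis (z : ℂ) (t s : ℝ) (ht : 0 < t) (hs : 0 < s) :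
    coshD (0, t) (z, s) = (Complex.normSq z + t^2 + s^2) / (2*t*s) := by
  rw [coshD]
  simp only [Complex.sq_norm]
  have h : ((0:ℂ), t).1 - ((z, s)).1 = -z := by simp
  rw [h, Complex.normSq_neg]
  field_simp
  ring

/-! ### The normalized computation: vertical axis vs. semicircle -/

lemma core_lemma (c d : ℂ) (hc : c ≠ 0) (hd : d ≠ 0) (hcd : c ≠ d) :
    Real.cosh (geodDist (geodesicUHS ((0:ℂ) : OnePoint ℂ) ∞)
        (geodesicUHS (c : OnePoint ℂ) (d : OnePoint ℂ))) =
      (‖c‖ + ‖d‖) / ‖c - d‖ := by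
  set A := ‖c‖ with hA
  set B := ‖d‖ with hB
  have hE : ‖c - d‖ = ‖d - c‖ := by
    rw [← norm_neg]; ring_nf
  set E := ‖d - c‖ with hEdef
  have hA0 : 0 < A := by simpa [hA] using hc
  have hB0 : 0 < B := by simpa [hB] using hd
  have hE0 : 0 < E := by
    simp only [hEdef, norm_pos_iff]; exact sub_ne_zero.mpr (Ne.symm hcd)
  have htri : E ≤ A + B := by
    have h := norm_add_le d (-c)
    simp only [← sub_eq_add_neg] at h
    have h2 : ‖-c‖ = A := by rw [norm_neg]
    rw [h2] at h
    calc E ≤ ‖d‖ + A := h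
      _ = A + B := by rw [hB]; ring
  rw [hE]
  apply cosh_geodDist_eq
  · rw [le_div_iff₀ hE0]; linarith
  · -- lower bound
    rintro p ⟨ht, hp1⟩ q ⟨hs, ⟨σ, hq1⟩, hcirc⟩
    have hs2 : q.2^2 = E^2 * (σ * (1-σ)) := by
      have := t2_of_circ hq1 hcirc
      rw [← Complex.sq_norm (d-c), ← hEdef] at this
      linarith
    have hnz : Complex.normSq q.1 = (1-σ)*A^2 + σ*B^2 - q.2^2 := by
      have := N_of_circ hq1 hcirc
      rw [← Complex.sq_norm c, ← Complex.sq_norm d, ← hA, ← hB] at this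
      linarith
    set M := (1-σ)*A^2 + σ*B^2 with hM
    have hM0 : 0 ≤ M := by nlinarith [Complex.normSq_nonneg q.1]
    have hsqM : Real.sqrt M ^ 2 = M := Real.sq_sqrt hM0
    have key : (A + B) * q.2 ≤ E * Real.sqrt M := by
      have h1 : ((A+B)*q.2)^2 ≤ (E * Real.sqrt M)^2 := by
        have : ((A+B)*q.2)^2 = (A+B)^2 * (E^2 * (σ*(1-σ))) := by rw [← hs2]; ring
        rw [this, mul_pow, hsqM]
        nlinarith [sq_nonneg ((1-σ)*A - σ*B)]
      have h2 : 0 ≤ (A+B)*q.2 := by positivity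
      have h3 := Real.sqrt_le_sqrt h1
      rwa [Real.sqrt_sq h2, Real.sqrt_sq (by positivity)] at h3
    have am : 2 * p.2 * Real.sqrt M ≤ p.2^2 + M := by
      nlinarith [sq_nonneg (p.2 - Real.sqrt M)]
    have hrw : coshD p q = (Complex.normSq q.1 + p.2^2 + q.2^2) / (2*p.2*q.2) := by
      rw [coshD, hp1]
      simp only [Complex.sq_norm, zero_sub, Complex.normSq_neg]
      field_simp
      ring
    rw [hrw, hnz, div_le_div_iff₀ hE0 (by positivity)]
    have c1 : 2*p.2*((A+B)*q.2) ≤ 2*p.2*(E*Real.sqrt M) :=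
      mul_le_mul_of_nonneg_left key (by positivity)
    have c2 : E*(2*p.2*Real.sqrt M) ≤ E*(p.2^2+M) := mul_le_mul_of_nonneg_left am (le_of_lt hE0)
    linarith [c1, c2]
  · -- attainment
    set g := Real.sqrt (A*B) with hgdef
    have hg : g^2 = A*B := Real.sq_sqrt (by positivity)
    have hg0 : 0 < g := Real.sqrt_pos.mpr (by positivity)
    set σ : ℝ := A/(A+B) with hσ
    set sstar : ℝ := E*g/(A+B) with hsstar
    have hss2 : sstar^2 = E^2*(A*B)/(A+B)^2 := by
      rw [hsstar, div_pow, mul_pow, hg]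
    refine ⟨(0, g), ⟨hg0, rfl⟩, (c + (σ:ℂ)*(d-c), sstar), ⟨by positivity, ⟨σ, rfl⟩, ?_⟩, ?_⟩
    · rw [Complex.sq_norm, Complex.sq_norm, chord_identity, ← Complex.sq_norm (d-c), ← hEdef]
      rw [hss2, hσ]
      field_simp
      ring
    · rw [coshD_axis _ _ _ hg0 (by positivity)]
      have hnz : Complex.normSq (c + (σ:ℂ)*(d-c)) =
          ((1-σ)*A^2 + σ*B^2) - E^2*(σ*(1-σ)) := by
        have := nz_identity c d σ
        rw [← Complex.sq_norm c, ← Complex.sq_norm d, ← Complex.sq_norm (d-c), ← hA, ← hB, ← hEdef]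
          at this
        linarith
      have hts : g * sstar = A*B*E/(A+B) := by
        rw [hsstar, show g*(E*g/(A+B)) = g^2*E/(A+B) by ring, hg]
      rw [hnz]
      have hnum : ((1-σ)*A^2 + σ*B^2) - E^2*(σ*(1-σ)) + g^2 + sstar^2 = 2*(A*B) := by
        rw [hg, hss2, hσ]
        field_simp
        ring
      rw [hnum]
      rw [show 2*g*sstar = 2*(g*sstar) by ring, hts]
      field_simp

/-! ### Transport along the inversion, and the two patterns -/

lemma geodDist_J (a c d : ℂ) (ha : a ≠ 0) (hc : c ≠ 0) (hd : d ≠ 0) (hcd : c ≠ d) :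
    geodDist (geodesicUHS ((a⁻¹:ℂ) : OnePoint ℂ) ∞)
        (geodesicUHS ((c⁻¹:ℂ) : OnePoint ℂ) ((d⁻¹:ℂ) : OnePoint ℂ)) =
      geodDist (geodesicUHS (a : OnePoint ℂ) (((0:ℂ)) : OnePoint ℂ))
        (geodesicUHS (c : OnePoint ℂ) (d : OnePoint ℂ)) := by
  apply geodDist_congr Jmap
  · exact fun p hp => J_mem_circ_to_vert a ha p hp
  · exact fun q hq => J_mem_circ c d hc hd hcd q hq
  · intro p hp
    refine ⟨Jmap p, ?_, Jmap_Jmap p hp.1⟩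
    have h := J_mem_vert_to_circ (a⁻¹) (inv_ne_zero ha) p hp
    rwa [inv_inv] at h
  · intro q hq
    refine ⟨Jmap q, ?_, Jmap_Jmap q hq.1⟩
    have h := J_mem_circ (c⁻¹) (d⁻¹) (inv_ne_zero hc) (inv_ne_zero hd)
      (fun h => hcd (by rw [← inv_inv c, h, inv_inv])) q hq
    rwa [inv_inv, inv_inv] at h
  · exact fun p hp q hq => J_coshD p q hp.1 hq.1

lemma ratio_formula (u v x : ℂ) (hux : u ≠ x) (hvx : v ≠ x) :
    (1 + ‖(u-v)/(u-x)‖) / ‖1 - (u-v)/(u-x)‖ =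
      (‖u-v‖ + ‖u-x‖) / ‖v-x‖ := by
  have hux0 : (u - x) ≠ 0 := sub_ne_zero.mpr hux
  have h1 : (1 : ℂ) - (u-v)/(u-x) = (v-x)/(u-x) := by
    field_simp
    ring
  rw [h1, norm_div, norm_div]
  have ha : ‖u-x‖ ≠ 0 := by simpa [sub_eq_zero] using hux
  have hb : ‖v-x‖ ≠ 0 := by simpa [sub_eq_zero] using hvx
  field_simp
  ring

lemma recip_formula (μ : ℂ) (hμ : μ ≠ 0) :
    (1 + ‖μ‖) / ‖1 - μ‖ =
      (1 + ‖μ⁻¹‖) / ‖1 - μ⁻¹‖ := by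
  have h1 : (1:ℂ) - μ⁻¹ = -((1 - μ)/μ) := by field_simp; ring
  rw [h1, norm_neg, norm_div, norm_inv]
  have hA : ‖μ‖ ≠ 0 := by simpa using hμ
  rw [div_div_eq_mul_div]
  congr 1
  field_simp
  ring

lemma pattern_P1 (a c d : ℂ) (hac : a ≠ c) (had : a ≠ d) (hcd : c ≠ d) :
    Real.cosh (geodDist (geodesicUHS (a : OnePoint ℂ) ∞)
        (geodesicUHS (c : OnePoint ℂ) (d : OnePoint ℂ))) =
      (1 + ‖(a-c)/(a-d)‖) / ‖1 - (a-c)/(a-d)‖ := by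
  have htr := geodDist_trans_vert a c d (-a)
  rw [show (a + -a : ℂ) = 0 from by ring, show (c + -a : ℂ) = c - a from by ring,
      show (d + -a : ℂ) = d - a from by ring] at htr
  rw [← htr, core_lemma (c-a) (d-a) (sub_ne_zero.mpr (Ne.symm hac))
      (sub_ne_zero.mpr (Ne.symm had)) (fun h => hcd (by linear_combination h))]
  rw [ratio_formula a c d had hcd]
  rw [show ((c-a) - (d-a) : ℂ) = c - d from by ring]
  rw [show ‖c-a‖ = ‖a-c‖ from by
        rw [← norm_neg]; ring_nf,
      show ‖d-a‖ = ‖a-d‖ from by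
        rw [← norm_neg]; ring_nf]

lemma pattern_P2 (a b c d : ℂ) (h12 : a ≠ b) (h13 : a ≠ c) (h14 : a ≠ d)
    (h23 : b ≠ c) (h24 : b ≠ d) (h34 : c ≠ d) :
    Real.cosh (geodDist (geodesicUHS (a : OnePoint ℂ) (b : OnePoint ℂ))
        (geodesicUHS (c : OnePoint ℂ) (d : OnePoint ℂ))) =
      (1 + ‖((a-c)*(b-d))/((a-d)*(b-c))‖) /
        ‖1 - ((a-c)*(b-d))/((a-d)*(b-c))‖ := by
  have hab : (a - b : ℂ) ≠ 0 := sub_ne_zero.mpr h12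
  have hcb : (c - b : ℂ) ≠ 0 := sub_ne_zero.mpr (Ne.symm h23)
  have hdb : (d - b : ℂ) ≠ 0 := sub_ne_zero.mpr (Ne.symm h24)
  have hcdb : (c - b : ℂ) ≠ (d - b : ℂ) := fun h => h34 (by linear_combination h)
  have htr := geodDist_trans_circ a b c d (-b)
  rw [show (a + -b : ℂ) = a - b from by ring, show (b + -b : ℂ) = 0 from by ring,
      show (c + -b : ℂ) = c - b from by ring, show (d + -b : ℂ) = d - b from by ring] at htr
  have hJ := geodDist_J (a-b) (c-b) (d-b) hab hcb hdb hcdb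
  rw [← htr, ← hJ]
  have hne1 : ((a-b)⁻¹ : ℂ) ≠ (c-b)⁻¹ := by
    intro h
    exact h13 (by have := inv_injective h; linear_combination this)
  have hne2 : ((a-b)⁻¹ : ℂ) ≠ (d-b)⁻¹ := by
    intro h
    exact h14 (by have := inv_injective h; linear_combination this)
  have hne3 : ((c-b)⁻¹ : ℂ) ≠ (d-b)⁻¹ := by
    intro h
    exact h34 (by have := inv_injective h; linear_combination this)
  rw [pattern_P1 ((a-b)⁻¹) ((c-b)⁻¹) ((d-b)⁻¹) hne1 hne2 hne3]
  have hμd : ((a-b)⁻¹ - (d-b)⁻¹ : ℂ) ≠ 0 := sub_ne_zero.mpr hne2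
  have had' : (a - d : ℂ) ≠ 0 := sub_ne_zero.mpr h14
  have hbc' : (b - c : ℂ) ≠ 0 := sub_ne_zero.mpr h23
  have hbd' : (b - d : ℂ) ≠ 0 := sub_ne_zero.mpr h24
  have hkey : ((a-b)⁻¹ - (c-b)⁻¹)/((a-b)⁻¹ - (d-b)⁻¹) =
      ((a-c)*(b-d))/((a-d)*(b-c)) := by
    rw [div_eq_div_iff hμd (mul_ne_zero had' hbc')]
    field_simp
    ring
  rw [hkey]

/-! ### The main theorem -/

lemma fv_coe (a : ℂ) : fv (a : OnePoint ℂ) = a := rfl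

lemma fv_infty : fv (∞ : OnePoint ℂ) = 0 := rfl

lemma neg_quot (x y : ℂ) : (-x)/(-y) = x/y := neg_div_neg_eq x y

/-- The hyperbolic distance `d` between the disjoint geodesics `(w₁,w₂)` and `(w₃,w₄)`
satisfies `cosh d = (1 + |[w₁,w₂;w₃,w₄]|) / |1 - [w₁,w₂;w₃,w₄]|`. -/
theorem cosh_dist_eq_crossRatio (w1 w2 w3 w4 : OnePoint ℂ)
    (h12 : w1 ≠ w2) (h13 : w1 ≠ w3) (h14 : w1 ≠ w4)
    (h23 : w2 ≠ w3) (h24 : w2 ≠ w4) (h34 : w3 ≠ w4)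
    (hdisj : Disjoint (geodesicUHS w1 w2) (geodesicUHS w3 w4)) :
    Real.cosh (geodDist (geodesicUHS w1 w2) (geodesicUHS w3 w4)) =
      (1 + ‖crossRatio w1 w2 w3 w4‖) /
        ‖1 - crossRatio w1 w2 w3 w4‖ := by
  clear hdisj
  induction w1 using OnePoint.rec with
  | infty =>
    induction w2 using OnePoint.rec with
    | infty => exact absurd rfl h12
    | coe a =>
      induction w3 using OnePoint.rec with
      | infty => exact absurd rfl h13
      | coe c =>
        induction w4 using OnePoint.rec with
        | infty => exact absurd rfl h14
        | coe d =>
          have hac : a ≠ c := by simpa using h23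
          have had : a ≠ d := by simpa using h24
          have hcd : c ≠ d := by simpa using h34
          have hgeq : geodesicUHS (∞ : OnePoint ℂ) (a : OnePoint ℂ)
              = geodesicUHS (a : OnePoint ℂ) ∞ := rfl
          rw [hgeq, pattern_P1 a c d hac had hcd]
          have hcr : crossRatio ∞ (a : OnePoint ℂ) c d = (a-d)/(a-c) := by
            simp [crossRatio, fv_coe, fv_infty]
          rw [hcr]
          have hμ : ((a-c)/(a-d) : ℂ) ≠ 0 :=
            div_ne_zero (sub_ne_zero.mpr hac) (sub_ne_zero.mpr had)
          rw [recip_formula _ hμ, inv_div]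
  | coe a =>
    induction w2 using OnePoint.rec with
    | infty =>
      induction w3 using OnePoint.rec with
      | infty => exact absurd rfl h23
      | coe c =>
        induction w4 using OnePoint.rec with
        | infty => exact absurd rfl h24
        | coe d =>
          have hac : a ≠ c := by simpa using h13
          have had : a ≠ d := by simpa using h14
          have hcd : c ≠ d := by simpa using h34
          rw [pattern_P1 a c d hac had hcd]
          have hcr : crossRatio (a : OnePoint ℂ) ∞ c d = (a-c)/(a-d) := by
            simp [crossRatio, fv_coe, fv_infty, OnePoint.coe_ne_infty]
          rw [hcr]
    | coe b =>
      induction w3 using OnePoint.rec with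
      | infty =>
        induction w4 using OnePoint.rec with
        | infty => exact absurd rfl h34
        | coe d =>
          have hab : a ≠ b := by simpa using h12
          have hda : d ≠ a := by simpa using (Ne.symm h14)
          have hdb : d ≠ b := by simpa using (Ne.symm h24)
          rw [geodDist_symm]
          have hgeq : geodesicUHS (∞ : OnePoint ℂ) (d : OnePoint ℂ)
              = geodesicUHS (d : OnePoint ℂ) ∞ := rfl
          rw [hgeq, pattern_P1 d a b hda hdb hab]
          have hcr : crossRatio (a : OnePoint ℂ) b ∞ d = (b-d)/(a-d) := by
            simp [crossRatio, fv_coe, fv_infty, OnePoint.coe_ne_infty]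
          rw [hcr]
          have hμ : ((d-a)/(d-b) : ℂ) ≠ 0 :=
            div_ne_zero (sub_ne_zero.mpr hda) (sub_ne_zero.mpr hdb)
          rw [recip_formula _ hμ, inv_div]
          rw [show ((d-b)/(d-a) : ℂ) = (b-d)/(a-d) from by
            rw [show (d-b : ℂ) = -(b-d) from by ring, show (d-a : ℂ) = -(a-d) from by ring,
              neg_quot]]
      | coe c =>
        induction w4 using OnePoint.rec with
        | infty =>
          have hab : a ≠ b := by simpa using h12
          have hca : c ≠ a := by simpa using (Ne.symm h13)
          have hcb : c ≠ b := by simpa using (Ne.symm h23)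
          rw [geodDist_symm]
          rw [pattern_P1 c a b hca hcb hab]
          have hcr : crossRatio (a : OnePoint ℂ) b c ∞ = (a-c)/(b-c) := by
            simp [crossRatio, fv_coe, fv_infty, OnePoint.coe_ne_infty]
          rw [hcr]
          rw [show ((c-a)/(c-b) : ℂ) = (a-c)/(b-c) from by
            rw [show (c-a : ℂ) = -(a-c) from by ring, show (c-b : ℂ) = -(b-c) from by ring,
              neg_quot]]
        | coe d =>
          have hab : a ≠ b := by simpa using h12
          have hac : a ≠ c := by simpa using h13
          have had : a ≠ d := by simpa using h14
          have hbc : b ≠ c := by simpa using h23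
          have hbd : b ≠ d := by simpa using h24
          have hcd : c ≠ d := by simpa using h34
          rw [pattern_P2 a b c d hab hac had hbc hbd hcd]
          have hcr : crossRatio (a : OnePoint ℂ) b c d =
              ((a-c)*(b-d))/((a-d)*(b-c)) := by
            simp [crossRatio, fv_coe, fv_infty, OnePoint.coe_ne_infty]
          rw [hcr]
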